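/- Let U be an open neighborhood of the diagonal {(z,z)} in ℂ², and let F : U → ℂ be C^∞-smooth, bianalytic in the first variable z for each fixed w (i.e. ∂̄_z²F = 0) and bianalytic in conj(w) for each fixed z (i.e. ∂_w²F = 0). If there exists G : U → ℂ, bianalytic in z and C^∞-smooth in w, with F(z,w) = (z−w)² G(z,w) on U, then F ≡ 0 on a neighborhood of the diagonal. -/

import Mathlib

open Complex MeasureTheory Metric Real ComplexConjugate

noncomputable section

/-- The Wirtinger derivative `∂̄f = (1/2)(∂ₓf + i ∂_y f)`. -/
def dbar (f : ℂ → ℂ) (z : ℂ) : ℂ :=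
  (1 / 2 : ℂ) * (fderiv ℝ f z 1 + Complex.I * fderiv ℝ f z Complex.I)

/-- The Wirtinger derivative `∂f = (1/2)(∂ₓf − i ∂_y f)`. -/
def pdz (f : ℂ → ℂ) (z : ℂ) : ℂ :=
  (1 / 2 : ℂ) * (fderiv ℝ f z 1 - Complex.I * fderiv ℝ f z Complex.I)

/-- The normalized Laplacian `Δ̂ = (1/4)(∂²ₓ + ∂²_y)` of a real-valued function on `ℂ`. -/
def lap (Q : ℂ → ℝ) (z : ℂ) : ℝ :=
  (1 / 4 : ℝ) * (fderiv ℝ (fun w => fderiv ℝ Q w 1) z 1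
    + fderiv ℝ (fun w => fderiv ℝ Q w Complex.I) z Complex.I)

/-- Subharmonicity on a set: upper semicontinuity together with the sub-mean-value
property on every closed disk contained in the set. -/
def SubhOn (ψ : ℂ → ℝ) (Ω : Set ℂ) : Prop :=
  UpperSemicontinuousOn ψ Ω ∧
  ∀ z ∈ Ω, ∀ r : ℝ, 0 < r → closedBall z r ⊆ Ω →
    IntervalIntegrable (fun t : ℝ => ψ (z + (r : ℂ) * Complex.exp ((t : ℂ) * Complex.I)))
        volume 0 (2 * π) ∧
    ψ z ≤ (1 / (2 * π)) * ∫ t in (0:ℝ)..(2 * π),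
        ψ (z + (r : ℂ) * Complex.exp ((t : ℂ) * Complex.I))

/-- Bianalyticity (`∂̄²u = 0`) on a set, in the sense of distributions. -/
def BianalyticOn (u : ℂ → ℂ) (Ω : Set ℂ) : Prop :=
  ContinuousOn u Ω ∧
  ∀ φ : ℂ → ℂ, ContDiff ℝ (⊤ : ℕ∞) φ → HasCompactSupport φ → tsupport φ ⊆ Ω →
    ∫ z in Ω, u z * dbar (dbar φ) z = 0


namespace DUB

lemma rlin_eval (L : ℂ →L[ℝ] ℂ) (v : ℂ) : L v = v.re • L 1 + v.im • L I := by
  conv_lhs => rw [← Complex.re_add_im v]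
  rw [show (v.re : ℂ) + (v.im : ℂ) * I = v.re • (1:ℂ) + v.im • I by
    simp [Complex.real_smul]]
  rw [map_add, L.map_smul, L.map_smul]

/-- CR ⟹ complex differentiable. -/
lemma hasDerivAt_of_cr {g : ℂ → ℂ} {z : ℂ} (hd : DifferentiableAt ℝ g z)
    (h : fderiv ℝ g z I = I * fderiv ℝ g z 1) :
    HasDerivAt g (fderiv ℝ g z 1) z := by
  set L := fderiv ℝ g z with hL
  have h1 : HasFDerivAt g
      (ContinuousLinearMap.smulRight (1 : ℂ →L[ℂ] ℂ) (L 1)) z := by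
    apply hasFDerivAt_of_restrictScalars ℝ hd.hasFDerivAt
    ext v
    show v • L 1 = L v
    rw [rlin_eval L v, h]
    simp only [Complex.real_smul, smul_eq_mul]
    conv_lhs => rw [← Complex.re_add_im v]
    ring
  have := h1.hasDerivAt
  simpa using this

/-- anti-CR ⟹ conjugate is complex differentiable. -/
lemma hasDerivAt_conj_of_acr {g : ℂ → ℂ} {z : ℂ} (hd : DifferentiableAt ℝ g z)
    (h : fderiv ℝ g z I = (-I) * fderiv ℝ g z 1) :
    HasDerivAt (fun x => (starRingEnd ℂ) (g x)) ((starRingEnd ℂ) (fderiv ℝ g z 1)) z := by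
  set L := fderiv ℝ g z with hL
  have hc : HasFDerivAt (fun x => (starRingEnd ℂ) (g x))
      ((Complex.conjCLE.toContinuousLinearMap).comp L) z := by
    exact (Complex.conjCLE.toContinuousLinearMap.hasFDerivAt).comp z hd.hasFDerivAt
  have h1 : HasFDerivAt (fun x => (starRingEnd ℂ) (g x))
      (ContinuousLinearMap.smulRight (1 : ℂ →L[ℂ] ℂ) ((starRingEnd ℂ) (L 1))) z := by
    apply hasFDerivAt_of_restrictScalars ℝ hc
    ext v
    show v • (starRingEnd ℂ) (L 1) = (starRingEnd ℂ) (L v)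
    rw [rlin_eval L v, h]
    simp only [Complex.real_smul, smul_eq_mul, map_add, map_mul, Complex.conj_ofReal,
      map_neg, Complex.conj_I]
    conv_lhs => rw [← Complex.re_add_im v]
    ring
  simpa using h1.hasDerivAt

lemma fderiv_real_of_hasDerivAt {g : ℂ → ℂ} {c z : ℂ} (h : HasDerivAt g c z) (v : ℂ) :
    fderiv ℝ g z v = v * c := by
  have h2 : HasFDerivAt g ((ContinuousLinearMap.smulRight (1 : ℂ →L[ℂ] ℂ) c).restrictScalars ℝ) z :=
    h.hasFDerivAt.restrictScalars ℝ
  rw [h2.fderiv]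
  simp

end DUB

namespace DUB

/-- `∂̄_z` of a two-variable function, in full-derivative form. -/
def Dzf (u : ℂ × ℂ → ℂ) (p : ℂ × ℂ) : ℂ :=
  (1/2 : ℂ) * fderiv ℝ u p (1, 0) + ((1/2 : ℂ) * I) * fderiv ℝ u p (I, 0)

/-- `∂_w` of a two-variable function. -/
def Pwf (u : ℂ × ℂ → ℂ) (p : ℂ × ℂ) : ℂ :=
  (1/2 : ℂ) * fderiv ℝ u p (0, 1) + (-(1/2 : ℂ) * I) * fderiv ℝ u p (0, I)

/-- `∂̄_w` of a two-variable function. -/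
def Qwf (u : ℂ × ℂ → ℂ) (p : ℂ × ℂ) : ℂ :=
  (1/2 : ℂ) * fderiv ℝ u p (0, 1) + ((1/2 : ℂ) * I) * fderiv ℝ u p (0, I)

/-- z-slice holomorphy (Cauchy–Riemann) in full-derivative form. -/
def HZ (u : ℂ × ℂ → ℂ) (Ω : Set (ℂ × ℂ)) : Prop :=
  ∀ p ∈ Ω, fderiv ℝ u p (I, 0) = I * fderiv ℝ u p (1, 0)

/-- w-slice anti-holomorphy in full-derivative form. -/
def AW (u : ℂ × ℂ → ℂ) (Ω : Set (ℂ × ℂ)) : Prop :=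
  ∀ p ∈ Ω, fderiv ℝ u p (0, I) = (-I) * fderiv ℝ u p (0, 1)

lemma fderiv_fst_slice {u : ℂ × ℂ → ℂ} {z w : ℂ} (hd : DifferentiableAt ℝ u (z, w)) (a : ℂ) :
    fderiv ℝ (fun ζ => u (ζ, w)) z a = fderiv ℝ u (z, w) (a, 0) := by
  have h1 : HasFDerivAt (fun ζ : ℂ => (ζ, w))
      ((ContinuousLinearMap.id ℝ ℂ).prod 0) z := (hasFDerivAt_id z).prodMk (hasFDerivAt_const w z)
  have h2 : fderiv ℝ (fun ζ => u (ζ, w)) z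
      = (fderiv ℝ u (z, w)).comp ((ContinuousLinearMap.id ℝ ℂ).prod 0) :=
    (HasFDerivAt.comp z (hg := hd.hasFDerivAt) (hf := h1)).fderiv
  rw [h2]; rfl

lemma fderiv_snd_slice {u : ℂ × ℂ → ℂ} {z w : ℂ} (hd : DifferentiableAt ℝ u (z, w)) (a : ℂ) :
    fderiv ℝ (fun η => u (z, η)) w a = fderiv ℝ u (z, w) (0, a) := by
  have h1 : HasFDerivAt (fun η : ℂ => (z, η))
      ((0 : ℂ →L[ℝ] ℂ).prod (ContinuousLinearMap.id ℝ ℂ)) w :=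
    (hasFDerivAt_const z w).prodMk (hasFDerivAt_id w)
  have h2 : fderiv ℝ (fun η => u (z, η)) w
      = (fderiv ℝ u (z, w)).comp ((0 : ℂ →L[ℝ] ℂ).prod (ContinuousLinearMap.id ℝ ℂ)) :=
    (HasFDerivAt.comp w (hg := hd.hasFDerivAt) (hf := h1)).fderiv
  rw [h2]; rfl

lemma fderiv_diag {u : ℂ × ℂ → ℂ} {w : ℂ} (hd : DifferentiableAt ℝ u (w, w)) (a : ℂ) :
    fderiv ℝ (fun x => u (x, x)) w a = fderiv ℝ u (w, w) (a, a) := by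
  have h1 : HasFDerivAt (fun x : ℂ => (x, x))
      ((ContinuousLinearMap.id ℝ ℂ).prod (ContinuousLinearMap.id ℝ ℂ)) w :=
    (hasFDerivAt_id w).prodMk (hasFDerivAt_id w)
  have h2 : fderiv ℝ (fun x => u (x, x)) w
      = (fderiv ℝ u (w, w)).comp
          ((ContinuousLinearMap.id ℝ ℂ).prod (ContinuousLinearMap.id ℝ ℂ)) :=
    (HasFDerivAt.comp (f := fun x : ℂ => (x, x)) w hd.hasFDerivAt h1).fderiv
  rw [h2]; rfl

lemma dbar_fst_slice {u : ℂ × ℂ → ℂ} {z w : ℂ} (hd : DifferentiableAt ℝ u (z, w)) :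
    dbar (fun ζ => u (ζ, w)) z = Dzf u (z, w) := by
  unfold dbar Dzf
  rw [fderiv_fst_slice hd, fderiv_fst_slice hd]
  ring

lemma pdz_snd_slice {u : ℂ × ℂ → ℂ} {z w : ℂ} (hd : DifferentiableAt ℝ u (z, w)) :
    pdz (fun η => u (z, η)) w = Pwf u (z, w) := by
  unfold pdz Pwf
  rw [fderiv_snd_slice hd, fderiv_snd_slice hd]
  ring

lemma dbar_congr {f g : ℂ → ℂ} {z : ℂ} (h : f =ᶠ[nhds z] g) : dbar f z = dbar g z := by
  unfold dbar; rw [h.fderiv_eq]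

lemma pdz_congr {f g : ℂ → ℂ} {z : ℂ} (h : f =ᶠ[nhds z] g) : pdz f z = pdz g z := by
  unfold pdz; rw [h.fderiv_eq]

lemma diffAt {u : ℂ × ℂ → ℂ} {Ω : Set (ℂ × ℂ)} {p : ℂ × ℂ} (hΩ : IsOpen Ω)
    (hu : ContDiffOn ℝ (⊤ : ℕ∞) u Ω) (hp : p ∈ Ω) : DifferentiableAt ℝ u p :=
  (hu.contDiffAt (hΩ.mem_nhds hp)).differentiableAt (by simp)

lemma smooth_fderiv {u : ℂ × ℂ → ℂ} {Ω : Set (ℂ × ℂ)} (hΩ : IsOpen Ω)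
    (hu : ContDiffOn ℝ (⊤ : ℕ∞) u Ω) :
    ContDiffOn ℝ (⊤ : ℕ∞) (fderiv ℝ u) Ω :=
  hu.fderiv_of_isOpen hΩ (by simp)

lemma smooth_dv {u : ℂ × ℂ → ℂ} {Ω : Set (ℂ × ℂ)} (hΩ : IsOpen Ω)
    (hu : ContDiffOn ℝ (⊤ : ℕ∞) u Ω) (e : ℂ × ℂ) :
    ContDiffOn ℝ (⊤ : ℕ∞) (fun p => fderiv ℝ u p e) Ω :=
  (smooth_fderiv hΩ hu).clm_apply contDiffOn_const

lemma smooth_comb {u : ℂ × ℂ → ℂ} {Ω : Set (ℂ × ℂ)} (hΩ : IsOpen Ω)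
    (hu : ContDiffOn ℝ (⊤ : ℕ∞) u Ω) (c₁ c₂ : ℂ) (e₁ e₂ : ℂ × ℂ) :
    ContDiffOn ℝ (⊤ : ℕ∞) (fun p => c₁ * fderiv ℝ u p e₁ + c₂ * fderiv ℝ u p e₂) Ω :=
  (contDiffOn_const.mul (smooth_dv hΩ hu e₁)).add (contDiffOn_const.mul (smooth_dv hΩ hu e₂))

lemma smooth_Dzf {u : ℂ × ℂ → ℂ} {Ω : Set (ℂ × ℂ)} (hΩ : IsOpen Ω)
    (hu : ContDiffOn ℝ (⊤ : ℕ∞) u Ω) : ContDiffOn ℝ (⊤ : ℕ∞) (Dzf u) Ω :=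
  smooth_comb hΩ hu _ _ _ _

lemma smooth_Pwf {u : ℂ × ℂ → ℂ} {Ω : Set (ℂ × ℂ)} (hΩ : IsOpen Ω)
    (hu : ContDiffOn ℝ (⊤ : ℕ∞) u Ω) : ContDiffOn ℝ (⊤ : ℕ∞) (Pwf u) Ω :=
  smooth_comb hΩ hu _ _ _ _

lemma smooth_Qwf {u : ℂ × ℂ → ℂ} {Ω : Set (ℂ × ℂ)} (hΩ : IsOpen Ω)
    (hu : ContDiffOn ℝ (⊤ : ℕ∞) u Ω) : ContDiffOn ℝ (⊤ : ℕ∞) (Qwf u) Ω :=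
  smooth_comb hΩ hu _ _ _ _

lemma hz_of_dz_zero {u : ℂ × ℂ → ℂ} {p : ℂ × ℂ} (h : Dzf u p = 0) :
    fderiv ℝ u p (I, 0) = I * fderiv ℝ u p (1, 0) := by
  unfold Dzf at h
  linear_combination (-2 * I) * h + (fderiv ℝ u p (I, 0)) * Complex.I_mul_I

lemma dz_zero_of_hz {u : ℂ × ℂ → ℂ} {p : ℂ × ℂ}
    (h : fderiv ℝ u p (I, 0) = I * fderiv ℝ u p (1, 0)) : Dzf u p = 0 := by
  unfold Dzf; linear_combination ((1/2 : ℂ) * I) * h + ((1/2 : ℂ) * fderiv ℝ u p (1, 0)) * Complex.I_mul_I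

lemma aw_of_pw_zero {u : ℂ × ℂ → ℂ} {p : ℂ × ℂ} (h : Pwf u p = 0) :
    fderiv ℝ u p (0, I) = (-I) * fderiv ℝ u p (0, 1) := by
  unfold Pwf at h
  linear_combination (2 * I) * h + (fderiv ℝ u p (0, I)) * Complex.I_mul_I

lemma pw_zero_of_aw {u : ℂ × ℂ → ℂ} {p : ℂ × ℂ}
    (h : fderiv ℝ u p (0, I) = (-I) * fderiv ℝ u p (0, 1)) : Pwf u p = 0 := by
  unfold Pwf; linear_combination (-(1/2 : ℂ) * I) * h + ((1/2 : ℂ) * fderiv ℝ u p (0, 1)) * Complex.I_mul_I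

lemma qw_eq_of_aw {u : ℂ × ℂ → ℂ} {p : ℂ × ℂ}
    (h : fderiv ℝ u p (0, I) = (-I) * fderiv ℝ u p (0, 1)) :
    Qwf u p = fderiv ℝ u p (0, 1) := by
  unfold Qwf; linear_combination ((1/2 : ℂ) * I) * h + (-(1/2 : ℂ) * fderiv ℝ u p (0, 1)) * Complex.I_mul_I

end DUB

namespace DUB

variable {u : ℂ × ℂ → ℂ} {Ω : Set (ℂ × ℂ)}

lemma hasFDerivAt_dv (hΩ : IsOpen Ω) (hu : ContDiffOn ℝ (⊤ : ℕ∞) u Ω) {p : ℂ × ℂ}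
    (hp : p ∈ Ω) (e : ℂ × ℂ) :
    HasFDerivAt (fun q => fderiv ℝ u q e)
      ((ContinuousLinearMap.apply ℝ ℂ e).comp (fderiv ℝ (fderiv ℝ u) p)) p := by
  have hD : DifferentiableAt ℝ (fderiv ℝ u) p :=
    ((smooth_fderiv hΩ hu).contDiffAt (hΩ.mem_nhds hp)).differentiableAt (by simp)
  exact ((ContinuousLinearMap.apply ℝ ℂ e).hasFDerivAt).comp p hD.hasFDerivAt

lemma fderiv_dv_eq (hΩ : IsOpen Ω) (hu : ContDiffOn ℝ (⊤ : ℕ∞) u Ω) {p : ℂ × ℂ}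
    (hp : p ∈ Ω) (e v : ℂ × ℂ) :
    fderiv ℝ (fun q => fderiv ℝ u q e) p v = fderiv ℝ (fderiv ℝ u) p v e := by
  rw [(hasFDerivAt_dv hΩ hu hp e).fderiv]; rfl

/-- Key symmetry lemma: a directional linear relation between first derivatives
passes to each directional derivative. -/
lemma rel_pass (hΩ : IsOpen Ω) (hu : ContDiffOn ℝ (⊤ : ℕ∞) u Ω) {a b : ℂ × ℂ} {c : ℂ}
    (hrel : ∀ p ∈ Ω, fderiv ℝ u p a = c * fderiv ℝ u p b) {p : ℂ × ℂ} (hp : p ∈ Ω)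
    (e : ℂ × ℂ) :
    fderiv ℝ (fun q => fderiv ℝ u q e) p a = c * fderiv ℝ (fun q => fderiv ℝ u q e) p b := by
  have hsymm : IsSymmSndFDerivAt ℝ u p :=
    (hu.contDiffAt (hΩ.mem_nhds hp)).isSymmSndFDerivAt
      (by simp only [minSmoothness_of_isRCLikeNormedField]; exact WithTop.coe_le_coe.2 le_top)
  have hEq : (fun q => fderiv ℝ u q a) =ᶠ[nhds p] (fun q => c * fderiv ℝ u q b) := by
    filter_upwards [hΩ.mem_nhds hp] with q hq using hrel q hq
  have hdb : DifferentiableAt ℝ (fun q => fderiv ℝ u q b) p :=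
    (hasFDerivAt_dv hΩ hu hp b).differentiableAt
  have h1 : fderiv ℝ (fun q => fderiv ℝ u q a) p
      = fderiv ℝ (fun q => c * fderiv ℝ u q b) p := hEq.fderiv_eq
  have h2 : ∀ v, fderiv ℝ (fderiv ℝ u) p v a = c * fderiv ℝ (fderiv ℝ u) p v b := by
    intro v
    have hl := congrFun (congrArg (fun L => (L : (ℂ × ℂ) →L[ℝ] ℂ) ∘ id) h1) v
    simp only [Function.comp, id] at hl
    rw [fderiv_dv_eq hΩ hu hp a v] at hl
    rw [fderiv_const_mul (hasFDerivAt_dv hΩ hu hp b).differentiableAt c] at hl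
    rw [ContinuousLinearMap.smul_apply, smul_eq_mul] at hl
    rw [fderiv_dv_eq hΩ hu hp b v] at hl
    exact hl
  rw [fderiv_dv_eq hΩ hu hp e a, fderiv_dv_eq hΩ hu hp e b, hsymm a e, hsymm b e]
  exact h2 e

/-- relation passes to linear combinations of directional derivatives. -/
lemma rel_comb (hΩ : IsOpen Ω) (hu : ContDiffOn ℝ (⊤ : ℕ∞) u Ω) {a b : ℂ × ℂ} {c : ℂ}
    (hrel : ∀ p ∈ Ω, fderiv ℝ u p a = c * fderiv ℝ u p b) (c₁ c₂ : ℂ) (e₁ e₂ : ℂ × ℂ) :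
    ∀ p ∈ Ω, fderiv ℝ (fun q => c₁ * fderiv ℝ u q e₁ + c₂ * fderiv ℝ u q e₂) p a
      = c * fderiv ℝ (fun q => c₁ * fderiv ℝ u q e₁ + c₂ * fderiv ℝ u q e₂) p b := by
  intro p hp
  have d1 : DifferentiableAt ℝ (fun q => fderiv ℝ u q e₁) p :=
    (hasFDerivAt_dv hΩ hu hp e₁).differentiableAt
  have d2 : DifferentiableAt ℝ (fun q => fderiv ℝ u q e₂) p :=
    (hasFDerivAt_dv hΩ hu hp e₂).differentiableAt
  have expand : ∀ v : ℂ × ℂ,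
      fderiv ℝ (fun q => c₁ * fderiv ℝ u q e₁ + c₂ * fderiv ℝ u q e₂) p v
      = c₁ * fderiv ℝ (fun q => fderiv ℝ u q e₁) p v
        + c₂ * fderiv ℝ (fun q => fderiv ℝ u q e₂) p v := by
    intro v
    rw [fderiv_fun_add (d1.const_mul c₁) (d2.const_mul c₂),
      fderiv_const_mul d1 c₁, fderiv_const_mul d2 c₂]
    simp
  rw [expand a, expand b, rel_pass hΩ hu hrel hp e₁, rel_pass hΩ hu hrel hp e₂]
  ring

/-- derivative of a function vanishing near a point on the diagonal. -/
lemma fderiv_diag_zero {v : ℂ × ℂ → ℂ} {z0 w : ℂ} {r : ℝ}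
    (hd : DifferentiableAt ℝ v (w, w)) (hz : ∀ x ∈ ball z0 r, v (x, x) = 0)
    (hw : w ∈ ball z0 r) (a : ℂ) : fderiv ℝ v (w, w) (a, a) = 0 := by
  have h2 : (fun x : ℂ => v (x, x)) =ᶠ[nhds w] (fun _ => (0 : ℂ)) := by
    filter_upwards [isOpen_ball.mem_nhds hw] with x hx using hz x hx
  have h3 : fderiv ℝ (fun x : ℂ => v (x, x)) w = 0 := by
    rw [h2.fderiv_eq]; exact fderiv_const_apply 0
  have h4 := fderiv_diag hd a
  rw [h3] at h4
  exact h4.symm.trans rfl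

end DUB

namespace DUB

lemma mem_bidisk {z0 : ℂ} {r : ℝ} {p : ℂ × ℂ} :
    p ∈ ball ((z0, z0) : ℂ × ℂ) r ↔ p.1 ∈ ball z0 r ∧ p.2 ∈ ball z0 r := by
  rw [← ball_prod_same]; exact Set.mem_prod

lemma diffAt_snd_slice {u : ℂ × ℂ → ℂ} {z w : ℂ} (hd : DifferentiableAt ℝ u (z, w)) :
    DifferentiableAt ℝ (fun w' => u (z, w')) w := by
  have h1 : HasFDerivAt (fun η : ℂ => (z, η))
      ((0 : ℂ →L[ℝ] ℂ).prod (ContinuousLinearMap.id ℝ ℂ)) w :=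
    (hasFDerivAt_const z w).prodMk (hasFDerivAt_id w)
  exact (HasFDerivAt.comp w (hg := hd.hasFDerivAt) (hf := h1)).differentiableAt

/-- The key local vanishing lemma: a function holomorphic in `z`, antiholomorphic in `w`,
vanishing on the diagonal of a bidisk, vanishes on the bidisk. -/
lemma key_vanish {u : ℂ × ℂ → ℂ} {Uo : Set (ℂ × ℂ)} {z0 : ℂ} {r : ℝ}
    (hUo : IsOpen Uo) (hball : ball ((z0, z0) : ℂ × ℂ) r ⊆ Uo)
    (hu : ContDiffOn ℝ (⊤ : ℕ∞) u Uo) (hhz : HZ u Uo) (haw : AW u Uo)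
    (hdiag : ∀ x ∈ ball z0 r, u (x, x) = 0) :
    ∀ p ∈ ball ((z0, z0) : ℂ × ℂ) r, u p = 0 := by
  set seq : ℕ → (ℂ × ℂ → ℂ) := fun n => Qwf^[n] u with hseq
  have hseqS : ∀ n, seq (n + 1) = Qwf (seq n) := fun n => Function.iterate_succ_apply' Qwf n u
  have inv : ∀ n, ContDiffOn ℝ (⊤ : ℕ∞) (seq n) Uo ∧ HZ (seq n) Uo ∧ AW (seq n) Uo ∧
      ∀ x ∈ ball z0 r, seq n (x, x) = 0 := by
    intro n
    induction n with
    | zero => exact ⟨hu, hhz, haw, hdiag⟩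
    | succ n ih =>
      obtain ⟨hs, hz, ha, hd⟩ := ih
      have hsm : ContDiffOn ℝ (⊤ : ℕ∞) (Qwf (seq n)) Uo := smooth_Qwf hUo hs
      have hz' : HZ (Qwf (seq n)) Uo := fun p hp =>
        rel_comb hUo hs hz ((1:ℂ)/2) ((1/2 : ℂ) * I) (0, 1) (0, I) p hp
      have ha' : AW (Qwf (seq n)) Uo := fun p hp =>
        rel_comb hUo hs ha ((1:ℂ)/2) ((1/2 : ℂ) * I) (0, 1) (0, I) p hp
      have hd' : ∀ x ∈ ball z0 r, Qwf (seq n) (x, x) = 0 := by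
        intro x hx
        have hmem : ((x, x) : ℂ × ℂ) ∈ Uo := hball (mem_bidisk.2 ⟨hx, hx⟩)
        have hdiffn : DifferentiableAt ℝ (seq n) (x, x) := diffAt hUo hs hmem
        have e1 : fderiv ℝ (seq n) (x, x) (1, 1) = 0 := fderiv_diag_zero hdiffn hd hx 1
        have e2 : fderiv ℝ (seq n) (x, x) (I, I) = 0 := fderiv_diag_zero hdiffn hd hx I
        have f1 : fderiv ℝ (seq n) (x, x) (1, 0) + fderiv ℝ (seq n) (x, x) (0, 1) = 0 := by
          rw [← map_add]
          rw [show ((1 : ℂ), (0 : ℂ)) + ((0 : ℂ), (1 : ℂ)) = ((1 : ℂ), (1 : ℂ)) by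
            simp [Prod.ext_iff]]
          exact e1
        have f2 : fderiv ℝ (seq n) (x, x) (I, 0) + fderiv ℝ (seq n) (x, x) (0, I) = 0 := by
          rw [← map_add]
          rw [show ((I : ℂ), (0 : ℂ)) + ((0 : ℂ), (I : ℂ)) = ((I : ℂ), (I : ℂ)) by
            simp [Prod.ext_iff]]
          exact e2
        rw [hz (x, x) hmem] at f2
        show (1/2 : ℂ) * fderiv ℝ (seq n) (x, x) (0, 1)
            + ((1/2 : ℂ) * I) * fderiv ℝ (seq n) (x, x) (0, I) = 0
        linear_combination ((1:ℂ)/2) * f1 + ((1/2 : ℂ) * I) * f2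
          + (-(1/2 : ℂ) * fderiv ℝ (seq n) (x, x) (1, 0)) * Complex.I_mul_I
      exact ⟨by rw [hseqS]; exact hsm, by rw [hseqS]; exact hz',
        by rw [hseqS]; exact ha', by rw [hseqS]; exact hd'⟩
  intro p hp
  obtain ⟨hz1, hz2⟩ := mem_bidisk.1 hp
  set z := p.1 with hzdef
  set k : ℂ → ℂ := fun w => (starRingEnd ℂ) (u (z, w)) with hk
  have slice : ∀ n, ∀ w ∈ ball z0 r,
      HasDerivAt (fun w' => (starRingEnd ℂ) (seq n (z, w')))
        ((starRingEnd ℂ) (seq (n+1) (z, w))) w := by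
    intro n w hw
    obtain ⟨hs, hzn, han, hdn⟩ := inv n
    have hmem : ((z, w) : ℂ × ℂ) ∈ Uo := hball (mem_bidisk.2 ⟨hz1, hw⟩)
    have hd : DifferentiableAt ℝ (seq n) (z, w) := diffAt hUo hs hmem
    have hgd : DifferentiableAt ℝ (fun w' => seq n (z, w')) w := diffAt_snd_slice hd
    have hacr : fderiv ℝ (fun w' => seq n (z, w')) w I
        = (-I) * fderiv ℝ (fun w' => seq n (z, w')) w 1 := by
      rw [fderiv_snd_slice hd, fderiv_snd_slice hd]
      exact han (z, w) hmem
    have hder := hasDerivAt_conj_of_acr hgd hacr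
    have hval : fderiv ℝ (fun w' => seq n (z, w')) w 1 = seq (n+1) (z, w) := by
      rw [fderiv_snd_slice hd, hseqS n]
      exact (qw_eq_of_aw (han (z, w) hmem)).symm
    rw [hval] at hder
    exact hder
  have hkdiff : DifferentiableOn ℂ k (ball z0 r) := fun w hw =>
    ((slice 0 w hw).differentiableAt).differentiableWithinAt
  have kan : AnalyticOnNhd ℂ k (ball z0 r) := hkdiff.analyticOnNhd isOpen_ball
  have hiter : ∀ n, ∀ w ∈ ball z0 r, iteratedDeriv n k w = (starRingEnd ℂ) (seq n (z, w)) := by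
    intro n
    induction n with
    | zero => intro w hw; rfl
    | succ n ih =>
      intro w hw
      rw [iteratedDeriv_succ]
      have he : iteratedDeriv n k =ᶠ[nhds w] (fun w' => (starRingEnd ℂ) (seq n (z, w'))) := by
        filter_upwards [isOpen_ball.mem_nhds hw] with w' hw' using ih w' hw'
      rw [he.deriv_eq]
      exact (slice n w hw).deriv
  have hzero : ∀ n, iteratedDeriv n k z = 0 := by
    intro n
    rw [hiter n z hz1, (inv n).2.2.2 z hz1, map_zero]
  have hev : k =ᶠ[nhds z] 0 := by
    obtain ⟨pp, hpp⟩ := kan z hz1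
    obtain ⟨rr, hrb⟩ := hpp
    have hterm : ∀ (y : ℂ) (n : ℕ), (iteratedFDeriv ℂ n k z) (fun _ => y) = 0 := by
      intro y n
      rw [iteratedFDeriv_apply_eq_iteratedDeriv_mul_prod, hzero n, smul_zero]
    have hball0 : ∀ y ∈ EMetric.ball (0 : ℂ) rr, k (z + y) = 0 := by
      intro y hy
      have hs := hrb.hasSum_iteratedFDeriv hy
      have h0 : (fun n => ((n).factorial : ℂ)⁻¹ • (iteratedFDeriv ℂ n k z) fun _ => y)
          = fun _ => (0 : ℂ) := funext fun n => by rw [hterm y n, smul_zero]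
      rw [h0] at hs
      exact hs.unique hasSum_zero
    filter_upwards [EMetric.ball_mem_nhds z hrb.r_pos] with x hx
    have hx' : x - z ∈ EMetric.ball (0 : ℂ) rr := by
      show edist (x - z) 0 < rr; rw [edist_zero_right, ← edist_eq_enorm_sub]; exact hx
    have := hball0 (x - z) hx'
    simpa using this
  have keq : Set.EqOn k 0 (ball z0 r) :=
    kan.eqOn_zero_of_preconnected_of_eventuallyEq_zero (convex_ball z0 r).isPreconnected hz1 hev
  have h1 : (starRingEnd ℂ) (u (z, p.2)) = 0 := keq hz2
  have h2 : u (z, p.2) = 0 := by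
    have := congrArg (starRingEnd ℂ) h1
    simpa using this
  simpa [hzdef] using h2

end DUB

namespace DUB

lemma main_u {u : ℂ × ℂ → ℂ} {Uo : Set (ℂ × ℂ)} {z0 : ℂ} {r : ℝ}
    (hUo : IsOpen Uo) (hball : ball ((z0, z0) : ℂ × ℂ) r ⊆ Uo)
    (hu : ContDiffOn ℝ (⊤ : ℕ∞) u Uo) (hhz : HZ u Uo)
    (hpp : ∀ p ∈ Uo, Pwf (Pwf u) p = 0)
    (hd0 : ∀ x ∈ ball z0 r, u (x, x) = 0)
    (hd1 : ∀ x ∈ ball z0 r, fderiv ℝ u (x, x) = 0) :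
    ∀ p ∈ ball ((z0, z0) : ℂ × ℂ) r, u p = 0 := by
  set d : ℂ × ℂ → ℂ := Pwf u with hd
  have hdsm : ContDiffOn ℝ (⊤ : ℕ∞) d Uo := smooth_Pwf hUo hu
  have hdhz : HZ d Uo := fun p hp =>
    rel_comb hUo hu hhz ((1:ℂ)/2) (-(1/2 : ℂ) * I) (0, 1) (0, I) p hp
  have hdaw : AW d Uo := fun p hp => aw_of_pw_zero (hpp p hp)
  have hddiag : ∀ x ∈ ball z0 r, d (x, x) = 0 := by
    intro x hx
    show (1/2 : ℂ) * fderiv ℝ u (x, x) (0, 1) + (-(1/2 : ℂ) * I) * fderiv ℝ u (x, x) (0, I) = 0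
    rw [hd1 x hx]
    simp
  set c : ℂ × ℂ → ℂ := fun p => u p - p.2 * d p with hc
  have hcsm : ContDiffOn ℝ (⊤ : ℕ∞) c Uo :=
    hu.sub ((contDiff_snd.contDiffOn).mul hdsm)
  -- pointwise expansion of the derivative of c on Uo
  have hcv : ∀ p ∈ Uo, ∀ v : ℂ × ℂ,
      fderiv ℝ c p v = fderiv ℝ u p v - (p.2 * fderiv ℝ d p v + d p * v.2) := by
    intro p hp v
    have hud : DifferentiableAt ℝ u p := diffAt hUo hu hp
    have hdd : DifferentiableAt ℝ d p := diffAt hUo hdsm hp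
    have hsndd : DifferentiableAt ℝ (fun q : ℂ × ℂ => q.2) p := differentiableAt_snd
    have h1 : fderiv ℝ c p = fderiv ℝ u p - (p.2 • fderiv ℝ d p + d p • fderiv ℝ
        (fun q : ℂ × ℂ => q.2) p) := by
      rw [hc]
      rw [fderiv_fun_sub hud (hsndd.fun_mul hdd), fderiv_fun_mul hsndd hdd]
    rw [h1]
    have h2 : fderiv ℝ (fun q : ℂ × ℂ => q.2) p v = v.2 := by
      rw [fderiv_snd]; rfl
    simp only [ContinuousLinearMap.sub_apply, ContinuousLinearMap.add_apply,
      ContinuousLinearMap.smul_apply, smul_eq_mul, h2]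
  have hchz : HZ c Uo := by
    intro p hp
    rw [hcv p hp (I, 0), hcv p hp (1, 0), hhz p hp, hdhz p hp]
    ring
  have hcaw : AW c Uo := by
    intro p hp
    apply aw_of_pw_zero
    have hpw : Pwf c p = (1/2 : ℂ) * fderiv ℝ c p (0, 1) + (-(1/2 : ℂ) * I) * fderiv ℝ c p (0, I) := rfl
    rw [hpw, hcv p hp (0, 1), hcv p hp (0, I)]
    have hPu : (1/2 : ℂ) * fderiv ℝ u p (0, 1) + (-(1/2 : ℂ) * I) * fderiv ℝ u p (0, I) = d p := rfl
    have hPd : (1/2 : ℂ) * fderiv ℝ d p (0, 1) + (-(1/2 : ℂ) * I) * fderiv ℝ d p (0, I) = 0 :=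
      hpp p hp
    linear_combination hPu - p.2 * hPd + ((1/2 : ℂ) * d p) * Complex.I_mul_I
  have hcdiag : ∀ x ∈ ball z0 r, c (x, x) = 0 := by
    intro x hx
    show u (x, x) - x * d (x, x) = 0
    rw [hd0 x hx, hddiag x hx]
    ring
  have hcz := key_vanish hUo hball hcsm hchz hcaw hcdiag
  have hdz := key_vanish hUo hball hdsm hdhz hdaw hddiag
  intro p hp
  have h1 := hcz p hp
  have h2 := hdz p hp
  have : u p - p.2 * d p = 0 := h1
  rw [h2] at this
  simpa using this

end DUB

namespace DUB

def Cz : ℂ × ℂ →L[ℝ] ℂ :=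
  (Complex.conjCLE.toContinuousLinearMap).comp (ContinuousLinearMap.fst ℝ ℂ ℂ)

lemma Cz_apply (v : ℂ × ℂ) : Cz v = (starRingEnd ℂ) v.1 := rfl

lemma conjfst_diffAt {p : ℂ × ℂ} :
    DifferentiableAt ℝ (fun q : ℂ × ℂ => (starRingEnd ℂ) q.1) p := Cz.differentiableAt

lemma conjfst_fderiv {p : ℂ × ℂ} :
    fderiv ℝ (fun q : ℂ × ℂ => (starRingEnd ℂ) q.1) p = Cz := Cz.fderiv

lemma conjfst_contDiffOn {Ω : Set (ℂ × ℂ)} :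
    ContDiffOn ℝ (⊤ : ℕ∞) (fun q : ℂ × ℂ => (starRingEnd ℂ) q.1) Ω := Cz.contDiff.contDiffOn

lemma fderiv_conjmul {v : ℂ × ℂ → ℂ} {p : ℂ × ℂ} (hd : DifferentiableAt ℝ v p) :
    fderiv ℝ (fun q => (starRingEnd ℂ) q.1 * v q) p
      = (starRingEnd ℂ) p.1 • fderiv ℝ v p + v p • Cz := by
  rw [fderiv_fun_mul conjfst_diffAt hd, conjfst_fderiv]

lemma pwf_congr {f g : ℂ × ℂ → ℂ} {p : ℂ × ℂ} (h : f =ᶠ[nhds p] g) : Pwf f p = Pwf g p := by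
  unfold Pwf; rw [h.fderiv_eq]

lemma dzf_congr {f g : ℂ × ℂ → ℂ} {p : ℂ × ℂ} (h : f =ᶠ[nhds p] g) : Dzf f p = Dzf g p := by
  unfold Dzf; rw [h.fderiv_eq]

lemma hz_pwf {u : ℂ × ℂ → ℂ} {Ω : Set (ℂ × ℂ)} (hΩ : IsOpen Ω)
    (hu : ContDiffOn ℝ (⊤ : ℕ∞) u Ω) (hhz : HZ u Ω) : HZ (Pwf u) Ω := fun p hp =>
  rel_comb hΩ hu hhz ((1:ℂ)/2) (-(1/2 : ℂ) * I) (0, 1) (0, I) p hp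

/-- If `sa + conj z · sb = 0` with `sa, sb` slice-holomorphic in `z`, then both vanish. -/
lemma split_zero {sa sb : ℂ × ℂ → ℂ} {Uo : Set (ℂ × ℂ)} (hUo : IsOpen Uo)
    (hsa : ContDiffOn ℝ (⊤ : ℕ∞) sa Uo) (hsb : ContDiffOn ℝ (⊤ : ℕ∞) sb Uo)
    (hza : HZ sa Uo) (hzb : HZ sb Uo)
    (hsum : ∀ p ∈ Uo, sa p + (starRingEnd ℂ) p.1 * sb p = 0) :
    ∀ p ∈ Uo, sb p = 0 ∧ sa p = 0 := by
  intro p hp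
  have hdb : DifferentiableAt ℝ sb p := diffAt hUo hsb hp
  have hzero : (fun p' => sa p' + (starRingEnd ℂ) p'.1 * sb p') =ᶠ[nhds p]
      (fun _ => (0 : ℂ)) := by
    filter_upwards [hUo.mem_nhds hp] with x hx using hsum x hx
  have h0 : fderiv ℝ (fun p' => sa p' + (starRingEnd ℂ) p'.1 * sb p') p = 0 := by
    rw [hzero.fderiv_eq]; exact fderiv_const_apply 0
  have h1 : fderiv ℝ (fun p' => sa p' + (starRingEnd ℂ) p'.1 * sb p') p
      = fderiv ℝ sa p + ((starRingEnd ℂ) p.1 • fderiv ℝ sb p + sb p • Cz) := by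
    rw [fderiv_fun_add (diffAt hUo hsa hp) (conjfst_diffAt.fun_mul hdb), fderiv_conjmul hdb]
  rw [h1] at h0
  have e1 : fderiv ℝ sa p (1, 0) + ((starRingEnd ℂ) p.1 * fderiv ℝ sb p (1, 0) + sb p * 1) = 0 := by
    have := congrArg (fun L : (ℂ × ℂ) →L[ℝ] ℂ => L (1, 0)) h0
    simpa [Cz_apply, smul_eq_mul] using this
  have e2 : fderiv ℝ sa p (I, 0) + ((starRingEnd ℂ) p.1 * fderiv ℝ sb p (I, 0)
      + sb p * (starRingEnd ℂ) I) = 0 := by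
    have := congrArg (fun L : (ℂ × ℂ) →L[ℝ] ℂ => L (I, 0)) h0
    simpa [Cz_apply, smul_eq_mul] using this
  rw [hza p hp, hzb p hp, Complex.conj_I] at e2
  have h3 : (2 * I) * sb p = 0 := by linear_combination I * e1 - e2
  have hb0 : sb p = 0 := by
    rcases mul_eq_zero.mp h3 with h | h
    · exact absurd h (by simp [Complex.I_ne_zero])
    · exact h
  refine ⟨hb0, ?_⟩
  have := hsum p hp
  rw [hb0] at this
  simpa using this

end DUB

namespace DUB

lemma master {F₀ G₀ : ℂ × ℂ → ℂ} {U : Set (ℂ × ℂ)} (hU : IsOpen U)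
    (hFsm : ContDiffOn ℝ (⊤ : ℕ∞) F₀ U) (hGsm : ContDiffOn ℝ (⊤ : ℕ∞) G₀ U)
    (hFz : ∀ p ∈ U, Dzf (Dzf F₀) p = 0)
    (hFw : ∀ p ∈ U, Pwf (Pwf F₀) p = 0)
    (hfact : ∀ p ∈ U, F₀ p = (p.1 - p.2) ^ 2 * G₀ p)
    (hdiag : ∀ z : ℂ, (z, z) ∈ U) :
    ∀ z0 : ℂ, ∀ r : ℝ, ball ((z0, z0) : ℂ × ℂ) r ⊆ U →
      ∀ p ∈ ball ((z0, z0) : ℂ × ℂ) r, F₀ p = 0 := by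
  intro z0 r hball
  set B : ℂ × ℂ → ℂ := Dzf F₀ with hB
  set Bg : ℂ × ℂ → ℂ := Dzf G₀ with hBg
  have hBsm : ContDiffOn ℝ (⊤ : ℕ∞) B U := smooth_Dzf hU hFsm
  have hBgsm : ContDiffOn ℝ (⊤ : ℕ∞) Bg U := smooth_Dzf hU hGsm
  have hHZB : HZ B U := fun p hp => hz_of_dz_zero (hFz p hp)
  set Lsub : ℂ × ℂ →L[ℝ] ℂ :=
    (ContinuousLinearMap.fst ℝ ℂ ℂ) - (ContinuousLinearMap.snd ℝ ℂ ℂ) with hLsub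
  set q : ℂ × ℂ → ℂ := fun p => (p.1 - p.2) ^ 2 with hq
  have hqd : ∀ p : ℂ × ℂ, HasFDerivAt q ((2 * (p.1 - p.2)) • Lsub) p := by
    intro p
    have h1 : HasFDerivAt (fun p : ℂ × ℂ => p.1 - p.2) Lsub p :=
      ContinuousLinearMap.hasFDerivAt Lsub
    have h2 := h1.mul h1
    have h3 : q = fun p : ℂ × ℂ => (p.1 - p.2) * (p.1 - p.2) := by
      funext x; rw [hq]; ring
    rw [h3, show ((2 * (p.1 - p.2)) • Lsub : ℂ × ℂ →L[ℝ] ℂ)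
      = (p.1 - p.2) • Lsub + (p.1 - p.2) • Lsub by
        refine ContinuousLinearMap.ext fun v => ?_
        show (2 * (p.1 - p.2)) * Lsub v = (p.1 - p.2) * Lsub v + (p.1 - p.2) * Lsub v
        ring]
    exact h2
  have hLsub1 : Lsub ((1 : ℂ), (0 : ℂ)) = 1 := by simp [hLsub]
  have hLsubI : Lsub ((I : ℂ), (0 : ℂ)) = I := by simp [hLsub]
  have hDF : ∀ p ∈ U, fderiv ℝ F₀ p
      = q p • fderiv ℝ G₀ p + G₀ p • ((2 * (p.1 - p.2)) • Lsub) := by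
    intro p hp
    have he : F₀ =ᶠ[nhds p] fun p' => q p' * G₀ p' := by
      filter_upwards [hU.mem_nhds hp] with x hx using hfact x hx
    rw [he.fderiv_eq, fderiv_fun_mul (hqd p).differentiableAt (diffAt hU hGsm hp), (hqd p).fderiv]
  have hqdiag : ∀ w : ℂ, q (w, w) = 0 := by intro w; rw [hq]; simp
  have hFd0 : ∀ w : ℂ, F₀ (w, w) = 0 := by
    intro w; rw [hfact (w, w) (hdiag w)]; simp
  have hFd1 : ∀ w : ℂ, fderiv ℝ F₀ (w, w) = 0 := by
    intro w; rw [hDF (w, w) (hdiag w), hqdiag w]; refine ContinuousLinearMap.ext fun v => ?_; simp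
  have hBfac : ∀ p ∈ U, B p = q p * Bg p := by
    intro p hp
    have h1 := hDF p hp
    show (1/2 : ℂ) * (fderiv ℝ F₀ p) (1, 0) + ((1/2 : ℂ) * I) * (fderiv ℝ F₀ p) (I, 0)
      = q p * ((1/2 : ℂ) * (fderiv ℝ G₀ p) (1, 0) + ((1/2 : ℂ) * I) * (fderiv ℝ G₀ p) (I, 0))
    rw [h1]
    simp only [ContinuousLinearMap.add_apply, ContinuousLinearMap.smul_apply,
      smul_eq_mul, hLsub1, hLsubI]
    linear_combination (G₀ p * (p.1 - p.2)) * Complex.I_mul_I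
  have hBd0 : ∀ w : ℂ, B (w, w) = 0 := by
    intro w; rw [hBfac (w, w) (hdiag w), hqdiag w]; ring
  have hBd1 : ∀ w : ℂ, fderiv ℝ B (w, w) = 0 := by
    intro w
    have he : B =ᶠ[nhds (w, w)] fun p' => q p' * Bg p' := by
      filter_upwards [hU.mem_nhds (hdiag w)] with x hx using hBfac x hx
    rw [he.fderiv_eq, fderiv_fun_mul (hqd (w, w)).differentiableAt (diffAt hU hBgsm (hdiag w)),
      (hqd (w, w)).fderiv, hqdiag w]
    refine ContinuousLinearMap.ext fun v => ?_; simp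
  set A : ℂ × ℂ → ℂ := fun p => F₀ p - (starRingEnd ℂ) p.1 * B p with hA
  have hAsm : ContDiffOn ℝ (⊤ : ℕ∞) A U := hFsm.sub (conjfst_contDiffOn.mul hBsm)
  have hAv : ∀ p ∈ U, fderiv ℝ A p
      = fderiv ℝ F₀ p - ((starRingEnd ℂ) p.1 • fderiv ℝ B p + B p • Cz) := by
    intro p hp
    rw [hA, fderiv_fun_sub (diffAt hU hFsm hp) (conjfst_diffAt.fun_mul (diffAt hU hBsm hp)),
      fderiv_conjmul (diffAt hU hBsm hp)]
  have hAd0 : ∀ w : ℂ, A (w, w) = 0 := by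
    intro w
    show F₀ (w, w) - (starRingEnd ℂ) w * B (w, w) = 0
    rw [hFd0 w, hBd0 w]; ring
  have hAd1 : ∀ w : ℂ, fderiv ℝ A (w, w) = 0 := by
    intro w
    rw [hAv (w, w) (hdiag w), hFd1 w, hBd1 w, hBd0 w]
    refine ContinuousLinearMap.ext fun v => ?_; simp
  have hAhz : HZ A U := by
    intro p hp
    have hBdef : (1/2 : ℂ) * fderiv ℝ F₀ p (1, 0) + ((1/2 : ℂ) * I) * fderiv ℝ F₀ p (I, 0)
        = B p := by rw [hB]; rfl
    rw [hAv p hp]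
    simp only [ContinuousLinearMap.sub_apply, ContinuousLinearMap.add_apply,
      ContinuousLinearMap.smul_apply, smul_eq_mul, Cz_apply, Complex.conj_I, map_one]
    linear_combination (-(starRingEnd ℂ) p.1) * (hHZB p hp) + (-2 * I) * hBdef
      + (fderiv ℝ F₀ p (I, 0)) * Complex.I_mul_I
  have hPwA : ∀ p ∈ U, Pwf A p = Pwf F₀ p - (starRingEnd ℂ) p.1 * Pwf B p := by
    intro p hp
    unfold Pwf
    rw [hAv p hp]
    simp only [ContinuousLinearMap.sub_apply, ContinuousLinearMap.add_apply,
      ContinuousLinearMap.smul_apply, smul_eq_mul, Cz_apply, map_zero]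
    ring
  have hSsum : ∀ p ∈ U, Pwf (Pwf A) p + (starRingEnd ℂ) p.1 * Pwf (Pwf B) p = 0 := by
    intro p hp
    have hdA : DifferentiableAt ℝ (Pwf A) p := diffAt hU (smooth_Pwf hU hAsm) hp
    have hdB : DifferentiableAt ℝ (Pwf B) p := diffAt hU (smooth_Pwf hU hBsm) hp
    have he : Pwf F₀ =ᶠ[nhds p]
        (fun p' => Pwf A p' + (starRingEnd ℂ) p'.1 * Pwf B p') := by
      filter_upwards [hU.mem_nhds hp] with x hx
      rw [hPwA x hx]; ring
    have h1 : Pwf (fun p' => Pwf A p' + (starRingEnd ℂ) p'.1 * Pwf B p') p = 0 :=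
      (pwf_congr he).symm.trans (hFw p hp)
    have h2 : fderiv ℝ (fun p' => Pwf A p' + (starRingEnd ℂ) p'.1 * Pwf B p') p
        = fderiv ℝ (Pwf A) p + ((starRingEnd ℂ) p.1 • fderiv ℝ (Pwf B) p + Pwf B p • Cz) := by
      rw [fderiv_fun_add hdA (conjfst_diffAt.fun_mul hdB), fderiv_conjmul hdB]
    have h3 : Pwf (fun p' => Pwf A p' + (starRingEnd ℂ) p'.1 * Pwf B p') p
        = Pwf (Pwf A) p + (starRingEnd ℂ) p.1 * Pwf (Pwf B) p := by
      show (1/2 : ℂ) * fderiv ℝ (fun p' => Pwf A p' + (starRingEnd ℂ) p'.1 * Pwf B p') p (0, 1)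
          + (-(1/2 : ℂ) * I) * fderiv ℝ (fun p' => Pwf A p' + (starRingEnd ℂ) p'.1 * Pwf B p') p (0, I)
        = ((1/2 : ℂ) * fderiv ℝ (Pwf A) p (0, 1) + (-(1/2 : ℂ) * I) * fderiv ℝ (Pwf A) p (0, I))
          + (starRingEnd ℂ) p.1 * ((1/2 : ℂ) * fderiv ℝ (Pwf B) p (0, 1)
            + (-(1/2 : ℂ) * I) * fderiv ℝ (Pwf B) p (0, I))
      rw [h2]
      simp only [ContinuousLinearMap.add_apply, ContinuousLinearMap.smul_apply,
        smul_eq_mul, Cz_apply, map_zero]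
      ring
    rw [h3] at h1
    exact h1
  have hsplit := split_zero hU (smooth_Pwf hU (smooth_Pwf hU hAsm))
    (smooth_Pwf hU (smooth_Pwf hU hBsm))
    (hz_pwf hU (smooth_Pwf hU hAsm) (hz_pwf hU hAsm hAhz))
    (hz_pwf hU (smooth_Pwf hU hBsm) (hz_pwf hU hBsm hHZB)) hSsum
  have hAres := main_u hU hball hAsm hAhz (fun p hp => (hsplit p hp).2)
    (fun x _ => hAd0 x) (fun x _ => hAd1 x)
  have hBres := main_u hU hball hBsm hHZB (fun p hp => (hsplit p hp).1)
    (fun x _ => hBd0 x) (fun x _ => hBd1 x)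
  intro p hp
  have h1 := hAres p hp
  have h2 := hBres p hp
  have h3 : A p = F₀ p - (starRingEnd ℂ) p.1 * B p := rfl
  rw [h1, h2] at h3
  linear_combination -h3

end DUB


/-- local uniqueness for doubly bianalytic kernels, Lemma 7.4: if `F` is
smooth on a neighborhood `U` of the diagonal of `ℂ²`, bianalytic in `z` and bianalytic in
`conj w`, and `F(z,w) = (z-w)² G(z,w)` for some `G` which is bianalytic in `z` and smooth,
then `F` vanishes on a neighborhood of the diagonal. -/
theorem diagonal_uniqueness_bianalytic
    (U : Set (ℂ × ℂ)) (F : ℂ → ℂ → ℂ)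
    (hU : IsOpen U) (hdiag : ∀ z : ℂ, (z, z) ∈ U)
    (hFsm : ContDiffOn ℝ (⊤ : ℕ∞) (fun p : ℂ × ℂ => F p.1 p.2) U)
    (hFz : ∀ p ∈ U, dbar (fun ζ => dbar (fun ξ => F ξ p.2) ζ) p.1 = 0)
    (hFw : ∀ p ∈ U, pdz (fun η => pdz (fun ξ => F p.1 ξ) η) p.2 = 0)
    (hG : ∃ G : ℂ → ℂ → ℂ,
        ContDiffOn ℝ (⊤ : ℕ∞) (fun p : ℂ × ℂ => G p.1 p.2) U ∧
        (∀ p ∈ U, dbar (fun ζ => dbar (fun ξ => G ξ p.2) ζ) p.1 = 0) ∧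
        ∀ p ∈ U, F p.1 p.2 = (p.1 - p.2) ^ 2 * G p.1 p.2) :
    ∃ V : Set (ℂ × ℂ), IsOpen V ∧ (∀ z : ℂ, (z, z) ∈ V) ∧ V ⊆ U ∧
      ∀ p ∈ V, F p.1 p.2 = 0 := by
  obtain ⟨G, hGsm, hGz, hfact⟩ := hG
  have trans_z : ∀ u : ℂ → ℂ → ℂ, ContDiffOn ℝ (⊤ : ℕ∞) (fun p : ℂ × ℂ => u p.1 p.2) U →
      (∀ p ∈ U, dbar (fun ζ => dbar (fun ξ => u ξ p.2) ζ) p.1 = 0) →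
      ∀ p ∈ U, DUB.Dzf (DUB.Dzf (fun p : ℂ × ℂ => u p.1 p.2)) p = 0 := by
    intro u husm h p hp
    have hp' : ((p.1, p.2) : ℂ × ℂ) ∈ U := by rwa [Prod.mk.eta]
    have hopen : IsOpen {ζ : ℂ | (ζ, p.2) ∈ U} :=
      hU.preimage (continuous_id.prodMk continuous_const)
    have he : (fun ζ => dbar (fun ξ => u ξ p.2) ζ) =ᶠ[nhds p.1]
        (fun ζ => DUB.Dzf (fun p : ℂ × ℂ => u p.1 p.2) (ζ, p.2)) := by
      filter_upwards [hopen.mem_nhds hp'] with ζ hζ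
      exact DUB.dbar_fst_slice (DUB.diffAt hU husm hζ)
    have h2 := h p hp
    rw [DUB.dbar_congr he] at h2
    rw [DUB.dbar_fst_slice (DUB.diffAt hU (DUB.smooth_Dzf hU husm) hp')] at h2
    rwa [Prod.mk.eta] at h2
  have hFz' := trans_z F hFsm hFz
  have hFw' : ∀ p ∈ U, DUB.Pwf (DUB.Pwf (fun p : ℂ × ℂ => F p.1 p.2)) p = 0 := by
    intro p hp
    have hp' : ((p.1, p.2) : ℂ × ℂ) ∈ U := by rwa [Prod.mk.eta]
    have hopen : IsOpen {η : ℂ | (p.1, η) ∈ U} :=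
      hU.preimage (continuous_const.prodMk continuous_id)
    have he : (fun η => pdz (fun ξ => F p.1 ξ) η) =ᶠ[nhds p.2]
        (fun η => DUB.Pwf (fun p : ℂ × ℂ => F p.1 p.2) (p.1, η)) := by
      filter_upwards [hopen.mem_nhds hp'] with η hη
      exact DUB.pdz_snd_slice (DUB.diffAt hU hFsm hη)
    have h2 := hFw p hp
    rw [DUB.pdz_congr he] at h2
    rw [DUB.pdz_snd_slice (DUB.diffAt hU (DUB.smooth_Pwf hU hFsm) hp')] at h2
    rwa [Prod.mk.eta] at h2
  have hfact' : ∀ p ∈ U, (fun p : ℂ × ℂ => F p.1 p.2) p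
      = (p.1 - p.2) ^ 2 * (fun p : ℂ × ℂ => G p.1 p.2) p := fun p hp => hfact p hp
  have hr : ∀ z : ℂ, ∃ r : ℝ, 0 < r ∧ ball ((z, z) : ℂ × ℂ) r ⊆ U := by
    intro z
    obtain ⟨r, hr0, hsub⟩ := Metric.isOpen_iff.mp hU (z, z) (hdiag z)
    exact ⟨r, hr0, hsub⟩
  choose rad hrad0 hradsub using hr
  refine ⟨⋃ z : ℂ, ball ((z, z) : ℂ × ℂ) (rad z), isOpen_iUnion (fun _ => isOpen_ball),
    fun z => Set.mem_iUnion.2 ⟨z, mem_ball_self (hrad0 z)⟩,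
    Set.iUnion_subset (fun z => hradsub z), ?_⟩
  intro p hp
  obtain ⟨z, hz⟩ := Set.mem_iUnion.1 hp
  exact DUB.master hU hFsm hGsm hFz' hFw' hfact' hdiag z (rad z) (hradsub z) p hz
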